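/- arXiv:1306.1596 — 2 statements merged into one kernel-verified Lean document; each statement's English description precedes it below -/
import Mathlib

section
/- The Kummer lattice J is an even integral lattice: for all u, w ∈ J one has B(u, w) ∈ ℤ, and for all u ∈ J one has B(u, u) ∈ 2ℤ. -/
/-- `I = 𝔽₂⁴`, the 16-element affine space over `𝔽₂`. -/
abbrev I : Type := Fin 4 → ZMod 2

/-- `Q` is the set of all subsets of `I` that arise as zero sets of affine-linear
equations `x ↦ f x + c`. -/
def Q : Set (Set I) :=
  {S | ∃ (f : I →ₗ[ZMod 2] ZMod 2) (c : ZMod 2), S = {x | f x + c = 0}}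

/-- `V = ℚ^I`, a 16-dimensional `ℚ`-vector space with standard basis `(e_a)_{a ∈ I}`. -/
abbrev V : Type := I → ℚ

/-- The standard basis vector `e_a` of `V`. -/
noncomputable def e (a : I) : V := Pi.single a 1

/-- The symmetric bilinear form with `B (e_a) (e_b) = -2` if `a = b` and `0` otherwise. -/
def B (u w : V) : ℚ := ∑ a : I, (-2) * u a * w a

/-- `v_α = (1/2) ∑_{a ∈ α} e_a`. -/
noncomputable def v (α : Set I) : V := α.indicator fun _ => (1 / 2 : ℚ)

/-- The Kummer lattice `J`: the `ℤ`-submodule of `V` generated by the `e_a` together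
with all `v_α` for `α ∈ Q`. -/
noncomputable def J : Submodule ℤ V := Submodule.span ℤ (Set.range e ∪ v '' Q)

/- ### Auxiliary lemmas -/

lemma dec2 : ∀ w1 w2 : Fin 4 → ZMod 2, ∀ c d : ZMod 2,
    2 ∣ (Finset.univ.filter (fun x : Fin 4 → ZMod 2 =>
      (∑ i, x i * w1 i) + c = 0 ∧ (∑ i, x i * w2 i) + d = 0)).card := by decide

lemma dec4 : ∀ w : Fin 4 → ZMod 2, ∀ c : ZMod 2,
    4 ∣ (Finset.univ.filter (fun x : Fin 4 → ZMod 2 => (∑ i, x i * w i) + c = 0)).card := by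
  decide

lemma card2 (f g : I →ₗ[ZMod 2] ZMod 2) (c d : ZMod 2) :
    2 ∣ (Finset.univ.filter (fun x : I => f x + c = 0 ∧ g x + d = 0)).card := by
  have h := dec2 (fun i => f fun j => if i = j then 1 else 0)
    (fun i => g fun j => if i = j then 1 else 0) c d
  convert h using 3
  rename_i x _
  rw [LinearMap.pi_apply_eq_sum_univ f x, LinearMap.pi_apply_eq_sum_univ g x]
  simp [smul_eq_mul]

lemma card4 (f : I →ₗ[ZMod 2] ZMod 2) (c : ZMod 2) :
    4 ∣ (Finset.univ.filter (fun x : I => f x + c = 0)).card := by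
  have h := dec4 (fun i => f fun j => if i = j then 1 else 0) c
  convert h using 3
  rename_i x _
  rw [LinearMap.pi_apply_eq_sum_univ f x]
  simp [smul_eq_mul]

lemma B_comm (x y : V) : B x y = B y x :=
  Finset.sum_congr rfl fun a _ => by ring

lemma B_add_left (x y w : V) : B (x + y) w = B x w + B y w := by
  unfold B
  rw [← Finset.sum_add_distrib]
  exact Finset.sum_congr rfl fun a _ => by simp only [Pi.add_apply]; ring

lemma B_smul_left (z : ℤ) (x w : V) : B (z • x) w = z * B x w := by
  unfold B
  rw [Finset.mul_sum]
  exact Finset.sum_congr rfl fun a _ => by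
    simp only [Pi.smul_apply, zsmul_eq_mul]; ring

lemma B_zero_left (w : V) : B 0 w = 0 := by simp [B]

open Classical in
lemma v_apply (α : Set I) (a : I) : v α a = if a ∈ α then (1/2 : ℚ) else 0 := by
  simp [v, Set.indicator_apply]

lemma B_vv (f g : I →ₗ[ZMod 2] ZMod 2) (c d : ZMod 2) :
    B (v {x | f x + c = 0}) (v {x | g x + d = 0})
      = -((Finset.univ.filter (fun x : I => f x + c = 0 ∧ g x + d = 0)).card : ℚ) / 2 := by
  unfold B
  have key : ∀ a : I, (-2) * v {x | f x + c = 0} a * v {x | g x + d = 0} a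
      = if f a + c = 0 ∧ g a + d = 0 then (-1/2 : ℚ) else 0 := by
    intro a
    rw [v_apply, v_apply]
    by_cases h1 : f a + c = 0 <;> by_cases h2 : g a + d = 0 <;>
      simp [h1, h2, Set.mem_setOf_eq] <;> norm_num
  rw [Finset.sum_congr rfl fun a _ => key a, ← Finset.sum_filter, Finset.sum_const,
    nsmul_eq_mul]
  ring

lemma B_ev (a : I) (β : Set I) : B (e a) (v β) = -(2 * v β a) := by
  unfold B e
  rw [show -(2 * v β a) = ∑ c : I, if c = a then -(2 * v β c) else 0 by
    rw [Finset.sum_ite_eq' Finset.univ a fun c => -(2 * v β c)]; simp]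
  exact Finset.sum_congr rfl fun c _ => by
    rcases eq_or_ne c a with h | h <;> simp [Pi.single_apply, h] <;> ring

lemma B_ee (a b : I) : B (e a) (e b) = if a = b then -2 else 0 := by
  unfold B e
  rw [show (if a = b then (-2:ℚ) else 0)
      = ∑ c : I, if c = a then (if a = b then (-2:ℚ) else 0) else 0 by
    rw [Finset.sum_ite_eq' Finset.univ a (fun _ => if a = b then (-2:ℚ) else 0)]; simp]
  refine Finset.sum_congr rfl fun c _ => ?_
  rcases eq_or_ne c a with h | h
  · subst h
    rcases eq_or_ne c b with h2 | h2 <;> simp [Pi.single_apply, h2, eq_comm]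
  · simp [Pi.single_apply, h, Ne.symm h]

lemma B_vv_int {α β : Set I} (hα : α ∈ Q) (hβ : β ∈ Q) : ∃ n : ℤ, B (v α) (v β) = n := by
  obtain ⟨f, c, rfl⟩ := hα
  obtain ⟨g, d, rfl⟩ := hβ
  obtain ⟨k, hk⟩ := card2 f g c d
  refine ⟨-k, ?_⟩
  rw [B_vv, hk]
  push_cast
  ring

lemma B_vv_even {α : Set I} (hα : α ∈ Q) : ∃ n : ℤ, B (v α) (v α) = 2 * n := by
  obtain ⟨f, c, rfl⟩ := hα
  obtain ⟨k, hk⟩ := card4 f c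
  have hfilt : (Finset.univ.filter (fun x : I => f x + c = 0 ∧ f x + c = 0)).card
      = (Finset.univ.filter (fun x : I => f x + c = 0)).card := by
    congr 1
    apply Finset.filter_congr
    intro x _
    simp
  refine ⟨-k, ?_⟩
  rw [B_vv, hfilt, hk]
  push_cast
  ring

open Classical in
lemma gen_int : ∀ x ∈ Set.range e ∪ v '' Q, ∀ y ∈ Set.range e ∪ v '' Q,
    ∃ n : ℤ, B x y = n := by
  rintro x (⟨a, rfl⟩ | ⟨α, hα, rfl⟩) y (⟨b, rfl⟩ | ⟨β, hβ, rfl⟩)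
  · refine ⟨if a = b then -2 else 0, ?_⟩
    rw [B_ee]; split <;> simp
  · refine ⟨if a ∈ β then -1 else 0, ?_⟩
    rw [B_ev, v_apply]; split <;> simp <;> norm_num
  · refine ⟨if b ∈ α then -1 else 0, ?_⟩
    rw [B_comm, B_ev, v_apply]; split <;> simp <;> norm_num
  · exact B_vv_int hα hβ

lemma gen_even : ∀ x ∈ Set.range e ∪ v '' Q, ∃ n : ℤ, B x x = 2 * n := by
  rintro x (⟨a, rfl⟩ | ⟨α, hα, rfl⟩)
  · refine ⟨-1, ?_⟩
    rw [B_ee]; norm_num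
  · exact B_vv_even hα

lemma B_add_right (x y w : V) : B w (x + y) = B w x + B w y := by
  rw [B_comm, B_add_left, B_comm x w, B_comm y w]

lemma B_smul_right (z : ℤ) (x w : V) : B w (z • x) = z * B w x := by
  rw [B_comm, B_smul_left, B_comm]

lemma J_int : ∀ u ∈ J, ∀ w ∈ J, ∃ n : ℤ, B u w = (n : ℚ) := by
  have inner : ∀ x ∈ Set.range e ∪ v '' Q, ∀ w ∈ J, ∃ n : ℤ, B x w = n := by
    intro x hx w hw
    induction hw using Submodule.span_induction with
    | mem y hy => exact gen_int x hx y hy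
    | zero => exact ⟨0, by rw [B_comm, B_zero_left]; simp⟩
    | add y z _ _ hy hz =>
      obtain ⟨m, hm⟩ := hy; obtain ⟨k, hk⟩ := hz
      exact ⟨m + k, by rw [B_add_right, hm, hk]; push_cast; ring⟩
    | smul z y _ hy =>
      obtain ⟨m, hm⟩ := hy
      exact ⟨z * m, by rw [B_smul_right, hm]; push_cast; ring⟩
  intro u hu
  induction hu using Submodule.span_induction with
  | mem x hx => exact inner x hx
  | zero => exact fun w _ => ⟨0, by rw [B_zero_left]; simp⟩
  | add y z _ _ hy hz =>
    intro w hw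
    obtain ⟨m, hm⟩ := hy w hw; obtain ⟨k, hk⟩ := hz w hw
    exact ⟨m + k, by rw [B_add_left, hm, hk]; push_cast; ring⟩
  | smul z y _ hy =>
    intro w hw
    obtain ⟨m, hm⟩ := hy w hw
    exact ⟨z * m, by rw [B_smul_left, hm]; push_cast; ring⟩

/-- The Kummer lattice `J` is an even integral lattice: for all
`u, w ∈ J` one has `B u w ∈ ℤ`, and for all `u ∈ J` one has `B u u ∈ 2ℤ`. -/
theorem stmt5 :
    (∀ u ∈ J, ∀ w ∈ J, ∃ n : ℤ, B u w = (n : ℚ)) ∧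
    (∀ u ∈ J, ∃ n : ℤ, B u u = (2 * n : ℤ)) := by
  refine ⟨J_int, ?_⟩
  intro u hu
  induction hu using Submodule.span_induction with
  | mem x hx =>
    obtain ⟨n, hn⟩ := gen_even x hx
    exact ⟨n, by rw [hn]; push_cast; ring⟩
  | zero => exact ⟨0, by rw [B_zero_left]; simp⟩
  | add y z hy' hz' hy hz =>
    obtain ⟨m, hm⟩ := hy; obtain ⟨k, hk⟩ := hz
    obtain ⟨n, hn⟩ := J_int y hy' z hz'
    refine ⟨m + k + n, ?_⟩
    rw [B_add_left, B_add_right, B_add_right, B_comm z y, hm, hk, hn]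
    push_cast; ring
  | smul z y _ hy =>
    obtain ⟨m, hm⟩ := hy
    refine ⟨z * z * m, ?_⟩
    rw [B_smul_left, B_smul_right, hm]
    push_cast; ring
end

section
/- The quotient J/M of the Kummer lattice J by the sublattice M is isomorphic as an abelian group to (ℤ/2ℤ)⁵; in particular M has index 2⁵ = 32 in J. -/
/-- `M` is the `ℤ`-span of the standard basis vectors `e_a`. -/
noncomputable def M : Submodule ℤ V := Submodule.span ℤ (Set.range e)

/-- the 5 test points -/
def p : Fin 5 → I := ![0, Pi.single 0 1, Pi.single 1 1, Pi.single 2 1, Pi.single 3 1]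

noncomputable def f2 (q : ℚ) : ZMod 2 := ((2*q).num : ZMod 2)

lemma f2_eq {q : ℚ} {n : ℤ} (h : 2*q = (n:ℚ)) : f2 q = (n : ZMod 2) := by
  rw [f2, h, Rat.num_intCast]

/-- the submodule of "affine" vectors -/
def U : Submodule ℤ V where
  carrier := {x | ∃ (f : I →ₗ[ZMod 2] ZMod 2) (c : ZMod 2),
    ∀ a, ∃ n : ℤ, 2 * x a = (n:ℚ) ∧ (n : ZMod 2) = f a + c}
  zero_mem' := ⟨0, 0, fun a => ⟨0, by simp⟩⟩
  add_mem' := by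
    rintro x y ⟨f, c, hx⟩ ⟨g, d, hy⟩
    refine ⟨f + g, c + d, fun a => ?_⟩
    obtain ⟨n, hn, hn2⟩ := hx a
    obtain ⟨m, hm, hm2⟩ := hy a
    exact ⟨n + m, by push_cast; rw [Pi.add_apply]; ring_nf; rw [mul_comm] at hn hm; rw [hn, hm],
      by push_cast [hn2, hm2]; simp [LinearMap.add_apply]; ring⟩
  smul_mem' := by
    rintro z x ⟨f, c, hx⟩
    refine ⟨(z : ZMod 2) • f, (z : ZMod 2) * c, fun a => ?_⟩
    obtain ⟨n, hn, hn2⟩ := hx a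
    refine ⟨z * n, ?_, ?_⟩
    · push_cast
      rw [Pi.smul_apply, zsmul_eq_mul]
      rw [mul_left_comm, hn]
    · push_cast [hn2]
      simp [LinearMap.smul_apply, smul_eq_mul]
      ring

lemma J_le_U : J ≤ U := by
  rw [J, Submodule.span_le]
  rintro x (⟨b, rfl⟩ | ⟨α, ⟨f, c, rfl⟩, rfl⟩)
  · refine ⟨0, 0, fun a => ⟨if b = a then 2 else 0, ?_, ?_⟩⟩
    · by_cases h : b = a <;> simp [e, Pi.single_apply, h]
    · by_cases h : b = a <;> simp [h] <;> try decide
  · refine ⟨f, c + 1, fun a => ⟨if f a + c = 0 then 1 else 0, ?_, ?_⟩⟩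
    · by_cases h : f a + c = 0 <;>
        simp [v, Set.indicator_apply, Set.mem_setOf_eq, h]
    · by_cases h : f a + c = 0
      · simp only [h, if_pos]
        rw [← add_assoc, h, zero_add]; simp
      · have h1 : f a + c = 1 := by
          revert h; generalize f a + c = x; revert x; decide
        simp only [h, if_neg, not_false_iff]
        rw [← add_assoc, h1]; simp; decide


/-- submodule of integer-coordinate vectors -/
def Z : Submodule ℤ V where
  carrier := {x | ∀ a, ∃ m : ℤ, x a = (m:ℚ)}
  zero_mem' := fun a => ⟨0, by simp⟩
  add_mem' := by
    rintro x y hx hy a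
    obtain ⟨n, hn⟩ := hx a; obtain ⟨m, hm⟩ := hy a
    exact ⟨n + m, by push_cast [Pi.add_apply, hn, hm]; ring⟩
  smul_mem' := by
    rintro z x hx a
    obtain ⟨n, hn⟩ := hx a
    exact ⟨z * n, by push_cast [Pi.smul_apply, zsmul_eq_mul, hn]; ring⟩

lemma M_le_Z : M ≤ Z := by
  rw [M, Submodule.span_le]
  rintro x ⟨b, rfl⟩ a
  exact ⟨if b = a then 1 else 0, by by_cases h : b = a <;> simp [e, Pi.single_apply, h]⟩

lemma mem_M_of_int (x : V) (hx : ∀ a, ∃ m : ℤ, x a = (m:ℚ)) : x ∈ M := by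
  choose m hm using hx
  have hx : x = ∑ a : I, (m a) • e a := by
    funext b
    rw [Finset.sum_apply]
    have : ∀ a : I, (m a • e a) b = if a = b then (m b : ℚ) else 0 := by
      intro a
      by_cases h : a = b <;> simp [e, Pi.single_apply, h, zsmul_eq_mul]
    simp only [this, Finset.sum_ite_eq', Finset.mem_univ, if_pos, hm b]
  rw [hx]
  exact Submodule.sum_mem _ fun a _ =>
    Submodule.smul_mem _ _ (Submodule.subset_span ⟨a, rfl⟩)

noncomputable def Φ : J →ₗ[ℤ] (Fin 5 → ZMod 2) where
  toFun x := fun i => f2 (x.1 (p i))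
  map_add' x y := by
    funext i
    obtain ⟨f, c, hx⟩ := J_le_U x.2
    obtain ⟨g, d, hy⟩ := J_le_U y.2
    obtain ⟨n, hn, -⟩ := hx (p i)
    obtain ⟨m, hm, -⟩ := hy (p i)
    have hxy : 2 * ((x + y).1 (p i)) = ((n + m : ℤ) : ℚ) := by
      push_cast
      show 2 * (x.1 (p i) + y.1 (p i)) = _
      rw [mul_add, hn, hm]
    show f2 ((x + y).1 (p i)) = f2 (x.1 (p i)) + f2 (y.1 (p i))
    rw [f2_eq hxy, f2_eq hn, f2_eq hm]
    push_cast; ring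
  map_smul' z x := by
    funext i
    obtain ⟨f, c, hx⟩ := J_le_U x.2
    obtain ⟨n, hn, -⟩ := hx (p i)
    have hzx : 2 * ((z • x).1 (p i)) = ((z * n : ℤ) : ℚ) := by
      push_cast
      show 2 * (z • (x.1 (p i))) = _
      rw [zsmul_eq_mul, mul_left_comm, hn]
    show f2 ((z • x).1 (p i)) = (z • fun i => f2 (x.1 (p i))) i
    rw [f2_eq hzx, Pi.smul_apply, f2_eq hn, zsmul_eq_mul]
    push_cast; ring


lemma lin_eq_zero (f : I →ₗ[ZMod 2] ZMod 2)
    (h : ∀ j : Fin 4, f (Pi.single j 1) = 0) (a : I) : f a = 0 := by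
  have ha : a = ∑ j : Fin 4, a j • (Pi.single j 1 : I) := by
    funext k
    rw [Finset.sum_apply]
    simp [Pi.single_apply, Finset.sum_ite_eq', smul_eq_mul]
  rw [ha, map_sum]
  simp [h]

lemma p_eval : p 0 = 0 ∧ ∀ j : Fin 4, p j.succ = Pi.single j 1 := by
  constructor
  · rfl
  · intro j; fin_cases j <;> rfl

lemma ker_Φ : LinearMap.ker Φ = M.comap J.subtype := by
  ext x
  simp only [LinearMap.mem_ker, Submodule.mem_comap, Submodule.subtype_apply]
  constructor
  · intro hx
    obtain ⟨f, c, h⟩ := J_le_U x.2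
    have key : ∀ i : Fin 5, f (p i) + c = 0 := by
      intro i
      obtain ⟨n, hn, hn2⟩ := h (p i)
      have := congrFun hx i
      simp only [Pi.zero_apply] at this
      rw [show Φ x i = f2 (x.1 (p i)) from rfl, f2_eq hn, hn2] at this
      exact this
    have hc : c = 0 := by
      have := key 0
      rw [p_eval.1, map_zero, zero_add] at this
      exact this
    have hf : ∀ j : Fin 4, f (Pi.single j 1) = 0 := by
      intro j
      have := key j.succ
      rw [p_eval.2 j, hc, add_zero] at this
      exact this
    apply mem_M_of_int
    intro a
    obtain ⟨n, hn, hn2⟩ := h a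
    have : (n : ZMod 2) = 0 := by rw [hn2, lin_eq_zero f hf a, hc, add_zero]
    obtain ⟨k, hk⟩ := (ZMod.intCast_zmod_eq_zero_iff_dvd n 2).1 this
    refine ⟨k, ?_⟩
    have : 2 * x.1 a = 2 * (k : ℚ) := by rw [hn, hk]; push_cast; ring
    linarith
  · intro hx
    funext i
    obtain ⟨m, hm⟩ := M_le_Z hx (p i)
    have : 2 * x.1 (p i) = ((2 * m : ℤ) : ℚ) := by rw [hm]; push_cast; ring
    show f2 (x.1 (p i)) = 0
    rw [f2_eq this]
    exact (ZMod.intCast_zmod_eq_zero_iff_dvd _ 2).2 ⟨m, by ring⟩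

lemma univ_mem_Q : Set.univ ∈ Q := ⟨0, 0, by ext x; simp⟩

lemma coord_mem_Q (j : Fin 4) : {x : I | x j = 0} ∈ Q :=
  ⟨LinearMap.proj j, 0, by ext x; simp⟩

lemma hvu : v Set.univ ∈ J :=
  Submodule.subset_span (Or.inr ⟨Set.univ, univ_mem_Q, rfl⟩)

lemma hvj (j : Fin 4) : v {x : I | x j = 0} ∈ J :=
  Submodule.subset_span (Or.inr ⟨_, coord_mem_Q j, rfl⟩)

lemma Φ_vu : Φ ⟨v Set.univ, hvu⟩ = fun _ => 1 := by
  funext i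
  show f2 (v Set.univ (p i)) = 1
  have : 2 * v Set.univ (p i) = ((1 : ℤ) : ℚ) := by
    norm_num [v, Set.indicator_apply]
  rw [f2_eq this]; norm_num

lemma Φ_vj (j : Fin 4) :
    Φ ⟨v {x : I | x j = 0}, hvj j⟩ = fun i => if p i j = 0 then 1 else 0 := by
  funext i
  show f2 (v {x : I | x j = 0} (p i)) = _
  by_cases h : p i j = 0
  · have : 2 * v {x : I | x j = 0} (p i) = ((1 : ℤ) : ℚ) := by
      norm_num [v, Set.indicator_apply, Set.mem_setOf_eq, h]
    rw [f2_eq this, if_pos h]; norm_num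
  · have : 2 * v {x : I | x j = 0} (p i) = ((0 : ℤ) : ℚ) := by
      simp [v, Set.indicator_apply, Set.mem_setOf_eq, h]
    rw [f2_eq this, if_neg h]; norm_num


lemma surj_Φ : Function.Surjective Φ := by
  intro y
  refine ⟨((y 0 + y 1 + y 2 + y 3 + y 4).val : ℤ) • ⟨v Set.univ, hvu⟩
    + ∑ j : Fin 4, (![((y 0 + y 1).val : ℤ), ((y 0 + y 2).val : ℤ),
      ((y 0 + y 3).val : ℤ), ((y 0 + y 4).val : ℤ)] j) •
        ⟨v {x : I | x j = 0}, hvj j⟩, ?_⟩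
  rw [map_add, map_smul, map_sum]
  simp only [map_smul, Φ_vu, Φ_vj]
  revert y
  decide


/-- The quotient `J/M` of the Kummer lattice `J` by the sublattice `M` is
isomorphic as an abelian group to `(ℤ/2ℤ)⁵`; in particular `M` has index `2⁵ = 32`
in `J`. -/
theorem stmt6 :
    M ≤ J ∧
    Nonempty ((↥J ⧸ M.comap J.subtype) ≃+ (Fin 5 → ZMod 2)) ∧
    Nat.card (↥J ⧸ M.comap J.subtype) = 32 := by
  have hMJ : M ≤ J := Submodule.span_mono Set.subset_union_left
  have hle : M.comap J.subtype ≤ LinearMap.ker Φ := le_of_eq ker_Φ.symm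
  have hinj : Function.Injective ((M.comap J.subtype).liftQ Φ hle) := by
    rw [← LinearMap.ker_eq_bot]
    exact Submodule.ker_liftQ_eq_bot _ _ hle (le_of_eq ker_Φ)
  have hsurj : Function.Surjective ((M.comap J.subtype).liftQ Φ hle) := by
    rw [← LinearMap.range_eq_top, Submodule.range_liftQ, LinearMap.range_eq_top]
    exact surj_Φ
  have eqv : (↥J ⧸ M.comap J.subtype) ≃+ (Fin 5 → ZMod 2) :=
    (LinearEquiv.ofBijective ((M.comap J.subtype).liftQ Φ hle)
      ⟨hinj, hsurj⟩).toAddEquiv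
  refine ⟨hMJ, ⟨eqv⟩, ?_⟩
  rw [Nat.card_congr eqv.toEquiv, Nat.card_eq_fintype_card, Fintype.card_fun]
  simp
end
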